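/- Let G be a group, ψ : G → ℤ a group homomorphism, and K = ker ψ. Let A ≤ G be a subgroup and suppose there exists b₀ ∈ G with ψ(b₀) = 1 which commutes with every element of A. Then the commutator subgroup ⁅A,A⁆ of A is contained in ⁅K,K⁆. -/

import Mathlib

open scoped commutatorElement

lemma commutator_mul_zpow_eq {G : Type*} [Group G] (x a b : G)
    (h1 : Commute x a) (h2 : Commute x b) (m n : ℤ) :
    ⁅a * x ^ m, b * x ^ n⁆ = ⁅a, b⁆ := by
  have s : ∀ p q : G, p * q = q * p → ∀ c : G, p * (q * c) = q * (p * c) := by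
    intro p q h c; rw [← mul_assoc, h, mul_assoc]
  have e1 : x ^ m * b = b * x ^ m := h2.zpow_left m
  have e3 : x ^ n * a⁻¹ = a⁻¹ * x ^ n := (h1.zpow_left n).inv_right
  have e8 : x ^ n * (x ^ m)⁻¹ = (x ^ m)⁻¹ * x ^ n :=
    ((Commute.refl x).zpow_zpow m n).symm.inv_right
  rw [commutatorElement_def, commutatorElement_def, mul_inv_rev, mul_inv_rev]
  simp only [mul_assoc]
  rw [s _ _ e1, s _ _ e8, mul_inv_cancel_left, s _ _ e3, mul_inv_cancel_left]

theorem commutator_subgroup_le_of_commuting_length_one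
    {G : Type*} [Group G] (ψ : G →* Multiplicative ℤ) (A : Subgroup G)
    (b₀ : G) (hb₀ : ψ b₀ = Multiplicative.ofAdd 1)
    (hcomm : ∀ a ∈ A, b₀ * a = a * b₀) :
    ⁅A, A⁆ ≤ ⁅ψ.ker, ψ.ker⁆ := by
  rw [Subgroup.commutator_le]
  intro a ha b hb
  have hK : ∀ c ∈ A, c * b₀ ^ (-(ψ c).toAdd) ∈ ψ.ker := by
    intro c _
    have : ψ (b₀ ^ (-(ψ c).toAdd)) = Multiplicative.ofAdd (-(ψ c).toAdd) := by
      rw [map_zpow, hb₀, ← ofAdd_zsmul]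
      simp
    simp only [MonoidHom.mem_ker, map_mul, this]
    rw [← ofAdd_toAdd (ψ c), ← ofAdd_add]
    simp
  have key : ⁅a, b⁆ = ⁅a * b₀ ^ (-(ψ a).toAdd), b * b₀ ^ (-(ψ b).toAdd)⁆ :=
    (commutator_mul_zpow_eq b₀ a b (hcomm a ha) (hcomm b hb) _ _).symm
  rw [key]
  exact Subgroup.commutator_mem_commutator (hK a ha) (hK b hb)
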